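/- Let Ω be a finite probability space with random variables A0 ∈ A (finite) and Y ∈ X (finite), P(A0 = a) = π(a) > 0, and define h(a|y) = P(A0 = a | Y = y) for y with P(Y = y) > 0. Then for any reward function r : X → ℝ: E[ (h(a|Y)/π(a)) · r(Y) ] = E[ r(Y) | A0 = a ]. In particular, if A0 and Y are independent then h(a|y) = π(a) for all valid y and both sides equal E[r(Y)]. -/

import Mathlib

open Finset
open scoped Classical

/-- Single-step state-conditional HCA (Statement 11):
`E[ (h(a|Y)/π(a)) · r(Y) ] = E[ r(Y) | A₀ = a ]` on a finite probability
space, where `π a = P(A₀ = a) > 0` and `h a y = P(A₀ = a | Y = y)`.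
In particular, if `A₀` and `Y` are independent then `h a y = π a` for every
`y` with `P(Y = y) > 0` and both sides equal `E[r(Y)]`. -/
theorem stmt_11 {Ω A X : Type*} [Fintype Ω] [Fintype A] [Fintype X]
    (p : Ω → ℝ) (hp : ∀ ω, 0 ≤ p ω) (hsum : ∑ ω, p ω = 1)
    (A0 : Ω → A) (Y : Ω → X) (a : A) (π : A → ℝ)
    (hπ : ∀ a', π a' = ∑ ω ∈ univ.filter (fun ω' => A0 ω' = a'), p ω)
    (hπpos : 0 < π a)
    (h : A → X → ℝ)
    (hdef : ∀ a' y, 0 < ∑ ω ∈ univ.filter (fun ω' => Y ω' = y), p ω →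
      h a' y = (∑ ω ∈ univ.filter (fun ω' => A0 ω' = a' ∧ Y ω' = y), p ω) /
               (∑ ω ∈ univ.filter (fun ω' => Y ω' = y), p ω))
    (r : X → ℝ) :
    (∑ ω, p ω * (h a (Y ω) / π a * r (Y ω))
        = (∑ ω ∈ univ.filter (fun ω' => A0 ω' = a), p ω * r (Y ω)) / π a) ∧
    ((∀ a' y, (∑ ω ∈ univ.filter (fun ω' => A0 ω' = a' ∧ Y ω' = y), p ω)
        = π a' * ∑ ω ∈ univ.filter (fun ω' => Y ω' = y), p ω) →
      (∀ y, 0 < ∑ ω ∈ univ.filter (fun ω' => Y ω' = y), p ω → h a y = π a) ∧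
      ∑ ω, p ω * (h a (Y ω) / π a * r (Y ω)) = ∑ ω, p ω * r (Y ω)) := by
  -- fiber sum notation
  set S : X → ℝ := fun y => ∑ ω ∈ univ.filter (fun ω' => Y ω' = y), p ω with hS
  have hSnonneg : ∀ y, 0 ≤ S y := fun y => Finset.sum_nonneg (fun ω _ => hp ω)
  have hfiberzero : ∀ y, S y = 0 → ∀ ω, Y ω = y → p ω = 0 := by
    intro y hSy ω hω
    have := (Finset.sum_eq_zero_iff_of_nonneg (fun ω _ => hp ω)).mp hSy ω
      (by simp [hω])
    exact this
  have key : ∑ ω, p ω * (h a (Y ω) * r (Y ω))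
      = ∑ ω ∈ univ.filter (fun ω' => A0 ω' = a), p ω * r (Y ω) := by
    have L : ∑ ω, p ω * (h a (Y ω) * r (Y ω))
        = ∑ y, ∑ ω ∈ univ.filter (fun ω' => Y ω' = y), p ω * (h a y * r y) := by
      rw [← Finset.sum_fiberwise univ Y (fun ω => p ω * (h a (Y ω) * r (Y ω)))]
      refine Finset.sum_congr rfl fun y _ => Finset.sum_congr rfl fun ω hω => ?_
      simp only [Finset.mem_filter] at hω
      rw [hω.2]
    have R : ∑ ω ∈ univ.filter (fun ω' => A0 ω' = a), p ω * r (Y ω)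
        = ∑ y, ∑ ω ∈ univ.filter (fun ω' => A0 ω' = a ∧ Y ω' = y), p ω * r y := by
      rw [← Finset.sum_fiberwise (univ.filter (fun ω' => A0 ω' = a)) Y
        (fun ω => p ω * r (Y ω))]
      refine Finset.sum_congr rfl fun y _ => ?_
      rw [Finset.filter_filter]
      refine Finset.sum_congr rfl fun ω hω => ?_
      simp only [Finset.mem_filter] at hω
      rw [hω.2.2]
    rw [L, R]
    refine Finset.sum_congr rfl fun y _ => ?_
    rw [← Finset.sum_mul, ← Finset.sum_mul]
    by_cases hy : 0 < S y
    · rw [hdef a y hy]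
      have hy' : (∑ ω ∈ univ.filter (fun ω' => Y ω' = y), p ω) ≠ 0 := hy.ne'
      field_simp
    · have hSy : S y = 0 := le_antisymm (not_lt.mp hy) (hSnonneg y)
      have h1 : (∑ ω ∈ univ.filter (fun ω' => Y ω' = y), p ω) = 0 := hSy
      have h2 : (∑ ω ∈ univ.filter (fun ω' => A0 ω' = a ∧ Y ω' = y), p ω) = 0 := by
        refine Finset.sum_eq_zero fun ω hω => ?_
        simp only [Finset.mem_filter] at hω
        exact hfiberzero y hSy ω hω.2.2
      rw [h1, h2]
      ring
  have main : ∑ ω, p ω * (h a (Y ω) / π a * r (Y ω))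
      = (∑ ω ∈ univ.filter (fun ω' => A0 ω' = a), p ω * r (Y ω)) / π a := by
    rw [← key, Finset.sum_div]
    refine Finset.sum_congr rfl fun ω _ => ?_
    field_simp
  refine ⟨main, fun hind => ?_⟩
  have hhy : ∀ y, 0 < S y → h a y = π a := by
    intro y hy
    rw [hdef a y hy, hind a y]
    have hy' : (∑ ω ∈ univ.filter (fun ω' => Y ω' = y), p ω) ≠ 0 := hy.ne'
    field_simp
  refine ⟨hhy, ?_⟩
  refine Finset.sum_congr rfl fun ω _ => ?_
  rcases eq_or_lt_of_le (hp ω) with h0 | h0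
  · rw [← h0]; ring
  · have hSpos : 0 < S (Y ω) := by
      by_contra hc
      exact absurd (hfiberzero (Y ω) (le_antisymm (not_lt.mp hc) (hSnonneg (Y ω))) ω rfl)
        (by linarith)
    rw [hhy (Y ω) hSpos, div_self (ne_of_gt hπpos), one_mul]
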